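/- Let $\Omega_0 \subset \mathbb{R}$ (dimension $n = 1$) be a bounded open interval, $T > 0$, and let $a, b, f$ be continuous on $\overline{\Omega}_0 \times [0,T]$ with $a \geq 0$, $a = 0$ at the two boundary points, and $b\,\nu \leq 0$ at each boundary point (where $\nu = \pm 1$ is the outward normal). Then any two solutions of $w_t = a\, w_{xx} + b\, w_x + f w + g$ on $\overline{\Omega}_0 \times [0,T]$, $C^2$ in space and $C^1$ in time, with the same initial data $w(\cdot, 0) = 0$, coincide; no boundary conditions are imposed. -/

import Mathlib

open Set Filter Topology

lemma my_deriv_le_of_isMaxOn {h : ℝ → ℝ} {s : Set ℝ} {c x₀ : ℝ}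
    (hd : DifferentiableAt ℝ h x₀) (hmax : IsMaxOn h s x₀) (hcs : segment ℝ x₀ c ⊆ s) :
    (c - x₀) * deriv h x₀ ≤ 0 := by
  have hloc : IsLocalMaxOn h s x₀ := hmax.localize
  have hfd : HasFDerivWithinAt h (ContinuousLinearMap.smulRight (1 : ℝ →L[ℝ] ℝ) (deriv h x₀)) s x₀ :=
    hd.hasDerivAt.hasFDerivAt.hasFDerivWithinAt
  have hy : c - x₀ ∈ posTangentConeAt s x₀ :=
    sub_mem_posTangentConeAt_of_segment_subset hcs
  have := hloc.hasFDerivWithinAt_nonpos hfd hy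
  simpa [smul_eq_mul] using this

lemma my_deriv2_nonpos_of_isLocalMax {h : ℝ → ℝ} (hh : ContDiff ℝ 2 h) {x₀ : ℝ}
    (hmax : IsLocalMax h x₀) : deriv (deriv h) x₀ ≤ 0 := by
  have h2 : ContDiff ℝ ((1 : ℕ) + 1) h := by exact_mod_cast hh
  rw [contDiff_succ_iff_deriv] at h2
  have hd1 : Differentiable ℝ h := h2.1
  have hd2 : Differentiable ℝ (deriv h) := h2.2.2.differentiable (by norm_num)
  by_contra hcon
  push_neg at hcon
  have h0 : deriv h x₀ = 0 := hmax.deriv_eq_zero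
  have hda : HasDerivAt (deriv h) (deriv (deriv h) x₀) x₀ := (hd2 x₀).hasDerivAt
  have htend := hasDerivAt_iff_tendsto_slope.1 hda
  have hev1 : ∀ᶠ y in 𝓝[≠] x₀, 0 < slope (deriv h) x₀ y :=
    htend.eventually (eventually_gt_nhds hcon)
  have hmono : 𝓝[>] x₀ ≤ 𝓝[≠] x₀ :=
    nhdsWithin_mono x₀ (fun y hy => ne_of_gt hy)
  have hev2 : ∀ᶠ y in 𝓝[>] x₀, 0 < slope (deriv h) x₀ y := hev1.filter_mono hmono
  have hev3 : ∀ᶠ y in 𝓝[>] x₀, h y ≤ h x₀ := hmax.filter_mono nhdsWithin_le_nhds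
  have hev := hev2.and hev3
  obtain ⟨u, hu, hsub⟩ := mem_nhdsGT_iff_exists_Ioo_subset.1 hev
  have hux : x₀ < u := hu
  have hderivpos : ∀ y ∈ Ioo x₀ u, 0 < deriv h y := by
    intro y hy
    have hs := (hsub hy).1
    rw [slope_def_field, h0, sub_zero] at hs
    rcases div_pos_iff.1 hs with ⟨h1, _⟩ | ⟨_, h2'⟩
    · exact h1
    · linarith [hy.1]
  set m := (x₀ + u) / 2 with hm
  have hxm : x₀ < m := by simp [hm]; linarith
  have hmu : m < u := by simp [hm]; linarith
  have hmono2 : StrictMonoOn h (Icc x₀ m) := by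
    apply strictMonoOn_of_deriv_pos (convex_Icc x₀ m) hd1.continuous.continuousOn
    intro x hx
    rw [interior_Icc] at hx
    exact hderivpos x ⟨hx.1, lt_trans hx.2 hmu⟩
  have h1 : h x₀ < h m := hmono2 ⟨le_rfl, hxm.le⟩ ⟨hxm.le, le_rfl⟩ hxm
  have h2' : h m ≤ h x₀ := (hsub ⟨hxm, hmu⟩).2
  linarith

lemma my_key (α β T C δ : ℝ) (hαβ : α < β) (hT : 0 < T) (hδ : 0 < δ)
    (a b f : ℝ → ℝ → ℝ)
    (hannn : ∀ x ∈ Set.Icc α β, ∀ t ∈ Set.Icc 0 T, 0 ≤ a x t)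
    (haα : ∀ t ∈ Set.Icc 0 T, a α t = 0) (haβ : ∀ t ∈ Set.Icc 0 T, a β t = 0)
    (hbα : ∀ t ∈ Set.Icc 0 T, 0 ≤ b α t) (hbβ : ∀ t ∈ Set.Icc 0 T, b β t ≤ 0)
    (hfC : ∀ x ∈ Set.Icc α β, ∀ t ∈ Set.Icc 0 T, f x t ≤ C)
    (w : ℝ → ℝ → ℝ)
    (hwt : ∀ x, Differentiable ℝ (w x)) (hwx : ∀ t, ContDiff ℝ 2 fun x => w x t)
    (hwc : Continuous fun p : ℝ × ℝ => w p.1 p.2)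
    (heq : ∀ x ∈ Set.Icc α β, ∀ t ∈ Set.Icc 0 T,
      deriv (w x) t = a x t * deriv (deriv fun y => w y t) x
        + b x t * deriv (fun y => w y t) x + f x t * w x t)
    (hinit : ∀ x ∈ Set.Icc α β, w x 0 = 0) :
    ∀ x ∈ Set.Icc α β, ∀ t ∈ Set.Icc 0 T,
      Real.exp (-C * t) * w x t - δ * t ≤ 0 := by
  set K : Set (ℝ × ℝ) := Set.Icc α β ×ˢ Set.Icc 0 T with hK
  set v : ℝ × ℝ → ℝ := fun p => Real.exp (-C * p.2) * w p.1 p.2 - δ * p.2 with hv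
  have hvcont : Continuous v := by
    apply Continuous.sub
    · exact ((Real.continuous_exp.comp (continuous_const.mul continuous_snd)).mul hwc)
    · exact continuous_const.mul continuous_snd
  have hKc : IsCompact K := isCompact_Icc.prod isCompact_Icc
  have hKne : K.Nonempty := ⟨(α, 0), ⟨⟨le_rfl, hαβ.le⟩, ⟨le_rfl, hT.le⟩⟩⟩
  obtain ⟨p₀, hp₀K, hp₀max⟩ := hKc.exists_isMaxOn hKne hvcont.continuousOn
  obtain ⟨x₀, t₀⟩ := p₀
  have hx₀ : x₀ ∈ Set.Icc α β := hp₀K.1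
  have ht₀ : t₀ ∈ Set.Icc 0 T := hp₀K.2
  -- main claim: v (x₀, t₀) ≤ 0
  have hmain : v (x₀, t₀) ≤ 0 := by
    by_contra hcon
    push_neg at hcon
    have ht₀pos : 0 < t₀ := by
      rcases ht₀.1.lt_or_eq with h | h
      · exact h
      · exfalso
        rw [hv] at hcon
        simp only [← h] at hcon
        rw [hinit x₀ hx₀] at hcon
        simp at hcon
    have hwpos : 0 < w x₀ t₀ := by
      have hexp : 0 < Real.exp (-C * t₀) := Real.exp_pos _
      have hcon' : 0 < Real.exp (-C * t₀) * w x₀ t₀ - δ * t₀ := hcon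
      nlinarith [mul_pos hδ ht₀pos]
    -- time derivative
    set φ : ℝ → ℝ := fun t => Real.exp (-C * t) * w x₀ t - δ * t with hφ
    have hφd : ∀ t, HasDerivAt φ
        (-C * Real.exp (-C * t) * w x₀ t + Real.exp (-C * t) * deriv (w x₀) t - δ) t := by
      intro t
      have h1 : HasDerivAt (fun s => Real.exp (-C * s)) (-C * Real.exp (-C * t)) t := by
        have := ((hasDerivAt_id t).const_mul (-C)).exp
        simpa [mul_comm] using this
      have h2 : HasDerivAt (w x₀) (deriv (w x₀) t) t := (hwt x₀ t).hasDerivAt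
      have h3 := (h1.mul h2).sub ((hasDerivAt_id t).const_mul δ)
      exact h3.congr_deriv (by ring)
    have hφmax : IsMaxOn φ (Set.Icc 0 T) t₀ := by
      intro t ht
      have := hp₀max (Set.mk_mem_prod hx₀ ht)
      simpa [hφ, hv] using this
    have hseg : segment ℝ t₀ 0 ⊆ Set.Icc 0 T := by
      rw [segment_symm, segment_eq_Icc ht₀pos.le]
      exact Set.Icc_subset_Icc le_rfl ht₀.2
    have hder1 := my_deriv_le_of_isMaxOn (hφd t₀).differentiableAt hφmax hseg
    rw [(hφd t₀).deriv] at hder1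
    have hφderiv_nonneg :
        0 ≤ -C * Real.exp (-C * t₀) * w x₀ t₀ + Real.exp (-C * t₀) * deriv (w x₀) t₀ - δ := by
      nlinarith [hder1, ht₀pos]
    -- so deriv (w x₀) t₀ - C * w x₀ t₀ ≥ δ * exp (C t₀) > 0
    have hexp : 0 < Real.exp (-C * t₀) := Real.exp_pos _
    have hkey1 : 0 < deriv (w x₀) t₀ - C * w x₀ t₀ := by
      nlinarith [hφderiv_nonneg, hexp, hδ]
    rw [heq x₀ hx₀ t₀ ht₀] at hkey1
    have hfw : f x₀ t₀ * w x₀ t₀ ≤ C * w x₀ t₀ :=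
      mul_le_mul_of_nonneg_right (hfC x₀ hx₀ t₀ ht₀) hwpos.le
    have hkey2 : 0 < a x₀ t₀ * deriv (deriv fun y => w y t₀) x₀
        + b x₀ t₀ * deriv (fun y => w y t₀) x₀ := by linarith
    -- spatial max
    set h : ℝ → ℝ := fun x => w x t₀ with hhdef
    have hhc : ContDiff ℝ 2 h := hwx t₀
    have hhd : Differentiable ℝ h := hhc.differentiable (by norm_num)
    have hhmax : IsMaxOn h (Set.Icc α β) x₀ := by
      intro x hx
      have := hp₀max (Set.mk_mem_prod hx ht₀)
      simp only [hv, Set.mem_setOf_eq] at this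
      have : Real.exp (-C * t₀) * w x t₀ ≤ Real.exp (-C * t₀) * w x₀ t₀ := by linarith
      exact le_of_mul_le_mul_left this hexp
    rcases eq_or_lt_of_le hx₀.1 with hxα | hxα
    · -- x₀ = α
      have hseg2 : segment ℝ x₀ β ⊆ Set.Icc α β := by
        rw [← hxα, segment_eq_Icc hαβ.le]
      have := my_deriv_le_of_isMaxOn (hhd x₀) hhmax hseg2
      have hdx : deriv h x₀ ≤ 0 := by nlinarith [hαβ, hxα ▸ this]
      have ha0 : a x₀ t₀ = 0 := by rw [← hxα]; exact haα t₀ ht₀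
      have hb0 : 0 ≤ b x₀ t₀ := by rw [← hxα]; exact hbα t₀ ht₀
      rw [ha0] at hkey2
      have : b x₀ t₀ * deriv (fun y => w y t₀) x₀ ≤ 0 :=
        mul_nonpos_of_nonneg_of_nonpos hb0 hdx
      linarith
    rcases eq_or_lt_of_le hx₀.2 with hxβ | hxβ
    · -- x₀ = β
      have hseg2 : segment ℝ x₀ α ⊆ Set.Icc α β := by
        rw [hxβ, segment_symm, segment_eq_Icc hαβ.le]
      have := my_deriv_le_of_isMaxOn (hhd x₀) hhmax hseg2
      have hdx : 0 ≤ deriv h x₀ := by nlinarith [hαβ, hxβ ▸ this]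
      have ha0 : a x₀ t₀ = 0 := by rw [hxβ]; exact haβ t₀ ht₀
      have hb0 : b x₀ t₀ ≤ 0 := by rw [hxβ]; exact hbβ t₀ ht₀
      rw [ha0] at hkey2
      have : b x₀ t₀ * deriv (fun y => w y t₀) x₀ ≤ 0 :=
        mul_nonpos_of_nonpos_of_nonneg hb0 hdx
      linarith
    · -- interior
      have hloc : IsLocalMax h x₀ :=
        hhmax.isLocalMax (Icc_mem_nhds hxα hxβ)
      have hd1 : deriv h x₀ = 0 := hloc.deriv_eq_zero
      have hd2 : deriv (deriv h) x₀ ≤ 0 := my_deriv2_nonpos_of_isLocalMax hhc hloc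
      have ha0 : 0 ≤ a x₀ t₀ := hannn x₀ hx₀ t₀ ht₀
      have : a x₀ t₀ * deriv (deriv h) x₀ ≤ 0 := mul_nonpos_of_nonneg_of_nonpos ha0 hd2
      rw [hhdef] at this hd1
      rw [hd1] at hkey2
      simp at hkey2
      linarith
  intro x hx t ht
  have := hp₀max (Set.mk_mem_prod hx ht)
  simp only [hv, Set.mem_setOf_eq] at this hmain ⊢
  linarith
lemma my_onesided (α β T : ℝ) (hαβ : α < β) (hT : 0 < T)
    (a b f : ℝ → ℝ → ℝ)
    (hfcont : ContinuousOn (fun p : ℝ × ℝ => f p.1 p.2) (Set.Icc α β ×ˢ Set.Icc 0 T))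
    (hannn : ∀ x ∈ Set.Icc α β, ∀ t ∈ Set.Icc 0 T, 0 ≤ a x t)
    (haα : ∀ t ∈ Set.Icc 0 T, a α t = 0) (haβ : ∀ t ∈ Set.Icc 0 T, a β t = 0)
    (hbα : ∀ t ∈ Set.Icc 0 T, 0 ≤ b α t) (hbβ : ∀ t ∈ Set.Icc 0 T, b β t ≤ 0)
    (w : ℝ → ℝ → ℝ)
    (hwt : ∀ x, Differentiable ℝ (w x)) (hwx : ∀ t, ContDiff ℝ 2 fun x => w x t)
    (hwc : Continuous fun p : ℝ × ℝ => w p.1 p.2)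
    (heq : ∀ x ∈ Set.Icc α β, ∀ t ∈ Set.Icc 0 T,
      deriv (w x) t = a x t * deriv (deriv fun y => w y t) x
        + b x t * deriv (fun y => w y t) x + f x t * w x t)
    (hinit : ∀ x ∈ Set.Icc α β, w x 0 = 0) :
    ∀ x ∈ Set.Icc α β, ∀ t ∈ Set.Icc 0 T, w x t ≤ 0 := by
  -- get a bound for f
  have hKc : IsCompact (Set.Icc α β ×ˢ Set.Icc 0 T) := isCompact_Icc.prod isCompact_Icc
  have hKne : (Set.Icc α β ×ˢ Set.Icc 0 T).Nonempty :=
    ⟨(α, 0), ⟨⟨le_rfl, hαβ.le⟩, ⟨le_rfl, hT.le⟩⟩⟩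
  obtain ⟨p, hpK, hpmax⟩ := hKc.exists_isMaxOn hKne hfcont
  set C := f p.1 p.2 with hC
  have hfC : ∀ x ∈ Set.Icc α β, ∀ t ∈ Set.Icc 0 T, f x t ≤ C := by
    intro x hx t ht
    exact hpmax (Set.mk_mem_prod hx ht)
  intro x hx t ht
  have hkey : ∀ ε > (0:ℝ), Real.exp (-C * t) * w x t ≤ ε := by
    intro ε hε
    have hδ : (0:ℝ) < ε / T := div_pos hε hT
    have := my_key α β T C (ε / T) hαβ hT hδ a b f hannn haα haβ hbα hbβ hfC
      w hwt hwx hwc heq hinit x hx t ht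
    have h1 : ε / T * t ≤ ε / T * T := mul_le_mul_of_nonneg_left ht.2 hδ.le
    have h2 : ε / T * T = ε := div_mul_cancel₀ ε hT.ne'
    linarith
  have hle : Real.exp (-C * t) * w x t ≤ 0 := by
    by_contra hcon
    push_neg at hcon
    have := hkey (Real.exp (-C * t) * w x t / 2) (by linarith)
    linarith
  have hexp : 0 < Real.exp (-C * t) := Real.exp_pos _
  nlinarith

/-- One-dimensional uniqueness for the degenerate parabolic equation
`wₜ = a w_{xx} + b w_x + f w + g` on `[α,β] × [0,T]` with `a ≥ 0`, `a = 0` at the two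
boundary points, and `b ν ≤ 0` at each boundary point (i.e. `b β ≤ 0` and `b α ≥ 0`);
no boundary conditions are imposed. -/
theorem stmt5 (α β T : ℝ) (hαβ : α < β) (hT : 0 < T)
    (a b f g : ℝ → ℝ → ℝ)
    (hacont : ContinuousOn (fun p : ℝ × ℝ => a p.1 p.2) (Set.Icc α β ×ˢ Set.Icc 0 T))
    (hbcont : ContinuousOn (fun p : ℝ × ℝ => b p.1 p.2) (Set.Icc α β ×ˢ Set.Icc 0 T))
    (hfcont : ContinuousOn (fun p : ℝ × ℝ => f p.1 p.2) (Set.Icc α β ×ˢ Set.Icc 0 T))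
    (hgcont : ContinuousOn (fun p : ℝ × ℝ => g p.1 p.2) (Set.Icc α β ×ˢ Set.Icc 0 T))
    (hannn : ∀ x ∈ Set.Icc α β, ∀ t ∈ Set.Icc 0 T, 0 ≤ a x t)
    (haα : ∀ t ∈ Set.Icc 0 T, a α t = 0) (haβ : ∀ t ∈ Set.Icc 0 T, a β t = 0)
    (hbα : ∀ t ∈ Set.Icc 0 T, 0 ≤ b α t) (hbβ : ∀ t ∈ Set.Icc 0 T, b β t ≤ 0)
    (w₁ w₂ : ℝ → ℝ → ℝ)
    (hw₁t : ∀ x, Differentiable ℝ (w₁ x)) (hw₂t : ∀ x, Differentiable ℝ (w₂ x))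
    (hw₁x : ∀ t, ContDiff ℝ 2 fun x => w₁ x t) (hw₂x : ∀ t, ContDiff ℝ 2 fun x => w₂ x t)
    (hw₁c : Continuous fun p : ℝ × ℝ => w₁ p.1 p.2)
    (hw₂c : Continuous fun p : ℝ × ℝ => w₂ p.1 p.2)
    (heq₁ : ∀ x ∈ Set.Icc α β, ∀ t ∈ Set.Icc 0 T,
      deriv (w₁ x) t = a x t * deriv (deriv fun y => w₁ y t) x
        + b x t * deriv (fun y => w₁ y t) x + f x t * w₁ x t + g x t)
    (heq₂ : ∀ x ∈ Set.Icc α β, ∀ t ∈ Set.Icc 0 T,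
      deriv (w₂ x) t = a x t * deriv (deriv fun y => w₂ y t) x
        + b x t * deriv (fun y => w₂ y t) x + f x t * w₂ x t + g x t)
    (hinit₁ : ∀ x ∈ Set.Icc α β, w₁ x 0 = 0) (hinit₂ : ∀ x ∈ Set.Icc α β, w₂ x 0 = 0) :
    ∀ x ∈ Set.Icc α β, ∀ t ∈ Set.Icc 0 T, w₁ x t = w₂ x t := by
  -- differentiability of spatial derivatives
  have hx1d : ∀ t, Differentiable ℝ (fun y => w₁ y t) :=
    fun t => (hw₁x t).differentiable (by norm_num)
  have hx2d : ∀ t, Differentiable ℝ (fun y => w₂ y t) :=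
    fun t => (hw₂x t).differentiable (by norm_num)
  have hx1d' : ∀ t, Differentiable ℝ (deriv fun y => w₁ y t) := by
    intro t
    have h2 : ContDiff ℝ ((1 : ℕ) + 1) (fun y => w₁ y t) := by exact_mod_cast hw₁x t
    rw [contDiff_succ_iff_deriv] at h2
    exact h2.2.2.differentiable (by norm_num)
  have hx2d' : ∀ t, Differentiable ℝ (deriv fun y => w₂ y t) := by
    intro t
    have h2 : ContDiff ℝ ((1 : ℕ) + 1) (fun y => w₂ y t) := by exact_mod_cast hw₂x t
    rw [contDiff_succ_iff_deriv] at h2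
    exact h2.2.2.differentiable (by norm_num)
  -- generic claim for a difference
  have main : ∀ u₁ u₂ : ℝ → ℝ → ℝ,
      (∀ x, Differentiable ℝ (u₁ x)) → (∀ x, Differentiable ℝ (u₂ x)) →
      (∀ t, ContDiff ℝ 2 fun x => u₁ x t) → (∀ t, ContDiff ℝ 2 fun x => u₂ x t) →
      (∀ t, Differentiable ℝ (deriv fun y => u₁ y t)) →
      (∀ t, Differentiable ℝ (deriv fun y => u₂ y t)) →
      (Continuous fun p : ℝ × ℝ => u₁ p.1 p.2) → (Continuous fun p : ℝ × ℝ => u₂ p.1 p.2) →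
      (∀ x ∈ Set.Icc α β, ∀ t ∈ Set.Icc 0 T,
        deriv (u₁ x) t = a x t * deriv (deriv fun y => u₁ y t) x
          + b x t * deriv (fun y => u₁ y t) x + f x t * u₁ x t + g x t) →
      (∀ x ∈ Set.Icc α β, ∀ t ∈ Set.Icc 0 T,
        deriv (u₂ x) t = a x t * deriv (deriv fun y => u₂ y t) x
          + b x t * deriv (fun y => u₂ y t) x + f x t * u₂ x t + g x t) →
      (∀ x ∈ Set.Icc α β, u₁ x 0 = 0) → (∀ x ∈ Set.Icc α β, u₂ x 0 = 0) →
      ∀ x ∈ Set.Icc α β, ∀ t ∈ Set.Icc 0 T, u₁ x t - u₂ x t ≤ 0 := by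
    intro u₁ u₂ hu₁t hu₂t hu₁x hu₂x hu₁x' hu₂x' hu₁c hu₂c heqa heqb hia hib
    set w : ℝ → ℝ → ℝ := fun x t => u₁ x t - u₂ x t with hw
    have hud₁ : ∀ t, Differentiable ℝ (fun y => u₁ y t) :=
      fun t => (hu₁x t).differentiable (by norm_num)
    have hud₂ : ∀ t, Differentiable ℝ (fun y => u₂ y t) :=
      fun t => (hu₂x t).differentiable (by norm_num)
    apply my_onesided α β T hαβ hT a b f hfcont hannn haα haβ hbα hbβ w
      (fun x => (hu₁t x).sub (hu₂t x)) (fun t => (hu₁x t).sub (hu₂x t))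
      (hu₁c.sub hu₂c)
    · intro x hx t ht
      have e1 : deriv (w x) t = deriv (u₁ x) t - deriv (u₂ x) t :=
        deriv_sub (hu₁t x t) (hu₂t x t)
      have e2 : deriv (fun y => w y t) x
          = deriv (fun y => u₁ y t) x - deriv (fun y => u₂ y t) x :=
        deriv_sub (hud₁ t x) (hud₂ t x)
      have e2' : (deriv fun y => w y t)
          = fun y => deriv (fun z => u₁ z t) y - deriv (fun z => u₂ z t) y :=
        funext fun y => deriv_sub (hud₁ t y) (hud₂ t y)
      have e3 : deriv (deriv fun y => w y t) x
          = deriv (deriv fun y => u₁ y t) x - deriv (deriv fun y => u₂ y t) x := by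
        rw [e2']
        exact deriv_sub (hu₁x' t x) (hu₂x' t x)
      rw [e1, e2, e3, heqa x hx t ht, heqb x hx t ht]
      simp only [hw]
      ring
    · intro x hx
      simp only [hw, hia x hx, hib x hx, sub_zero]
  intro x hx t ht
  have h1 := main w₁ w₂ hw₁t hw₂t hw₁x hw₂x hx1d' hx2d' hw₁c hw₂c heq₁ heq₂ hinit₁ hinit₂
    x hx t ht
  have h2 := main w₂ w₁ hw₂t hw₁t hw₂x hw₁x hx2d' hx1d' hw₂c hw₁c heq₂ heq₁ hinit₂ hinit₁
    x hx t ht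
  linarith
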